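/- Let I be an open interval and s: I → ℝ a strictly increasing continuous function (a scale function). Let F = { u ∈ L²(I, m) : u is absolutely continuous with respect to s with density du/ds ∈ L²(I, ds) and du/ds = 0 ds-a.e. on F₀ }, for a fixed measurable set F₀ ⊆ I, with E(u,v) = (1/2)∫_I (du/ds)(dv/ds) ds. Then (E, F) is a closed form: if {u_k} ⊆ F is Cauchy in the norm sqrt(E(u,u) + ‖u‖²_{L²(m)}), then u_k converges in that norm to some u ∈ F. -/

import Mathlib

open Filter MeasureTheory Set
open scoped RealInnerProductSpace Topology ENNReal

lemma aux_norm_sq {α : Type*} {m0 : MeasurableSpace α} {μ : Measure α} (X : Lp ℝ 2 μ) :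
    ‖X‖ ^ 2 = ∫ z, (X z) ^ 2 ∂μ := by
  rw [← real_inner_self_eq_norm_sq X, MeasureTheory.L2.inner_def]
  refine integral_congr_ae (Filter.Eventually.of_forall fun z => ?_)
  simp only
  rw [real_inner_self_eq_norm_sq, Real.norm_eq_abs, sq_abs]

lemma aux_integral_sq {α : Type*} {m0 : MeasurableSpace α} {μ : Measure α} (X : Lp ℝ 2 μ)
    {h : α → ℝ} (hh : h =ᵐ[μ] X) : ∫ z, (h z) ^ 2 ∂μ = ‖X‖ ^ 2 := by
  rw [aux_norm_sq]
  exact integral_congr_ae (hh.mono fun z hz => by simp only; rw [hz])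

/-- The form `E(u,v) = (1/2)∫ (du/ds)(dv/ds) ds` on functions absolutely continuous with
respect to a scale function `s`, with density vanishing `ds`-a.e. on a fixed set `F₀`,
is closed: Cauchy sequences in the form norm converge in that norm to a member. -/
theorem stmt8 (a b : ℝ) (hab : a < b)
    (m ν : Measure ℝ) [IsLocallyFiniteMeasure m] [IsLocallyFiniteMeasure ν]
    (hm : ∀ c d, a ≤ c → c < d → d ≤ b → 0 < m (Ioo c d))
    (s : ℝ → ℝ) (hs : StrictMonoOn s (Ioo a b)) (hsc : ContinuousOn s (Ioo a b))
    (hν : ∀ x ∈ Ioo a b, ∀ y ∈ Ioo a b, x ≤ y → ν (Ioo x y) = ENNReal.ofReal (s y - s x))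
    (F₀ : Set ℝ) (hF₀ : MeasurableSet F₀) (hF₀I : F₀ ⊆ Ioo a b)
    (u : ℕ → ℝ → ℝ) (f : ℕ → ℝ → ℝ)
    (hL2u : ∀ k, MemLp (u k) 2 (m.restrict (Ioo a b)))
    (hL2f : ∀ k, MemLp (f k) 2 (ν.restrict (Ioo a b)))
    (hac : ∀ k, ∀ x ∈ Ioo a b, ∀ y ∈ Ioo a b, x ≤ y →
      u k y - u k x = ∫ z in Ioo x y, f k z ∂ν)
    (hvanish : ∀ k, ∀ᵐ z ∂ν.restrict F₀, f k z = 0)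
    (hCauchy : ∀ ε > (0 : ℝ), ∃ N, ∀ k ≥ N, ∀ l ≥ N,
      (1 / 2) * (∫ z in Ioo a b, (f k z - f l z) ^ 2 ∂ν)
        + ∫ z in Ioo a b, (u k z - u l z) ^ 2 ∂m < ε) :
    ∃ (v : ℝ → ℝ) (g : ℝ → ℝ),
      MemLp v 2 (m.restrict (Ioo a b)) ∧
      MemLp g 2 (ν.restrict (Ioo a b)) ∧
      (∀ x ∈ Ioo a b, ∀ y ∈ Ioo a b, x ≤ y → v y - v x = ∫ z in Ioo x y, g z ∂ν) ∧
      (∀ᵐ z ∂ν.restrict F₀, g z = 0) ∧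
      Tendsto (fun k => (1 / 2) * (∫ z in Ioo a b, (f k z - g z) ^ 2 ∂ν)
        + ∫ z in Ioo a b, (u k z - v z) ^ 2 ∂m) atTop (nhds 0) := by
  classical
  set μν := ν.restrict (Ioo a b) with hμν
  set μm := m.restrict (Ioo a b) with hμm
  set F : ℕ → Lp ℝ 2 μν := fun k => (hL2f k).toLp (f k) with hF
  set U : ℕ → Lp ℝ 2 μm := fun k => (hL2u k).toLp (u k) with hU
  -- a.e. identifications
  have haeF : ∀ k l, (fun z => f k z - f l z) =ᵐ[μν] ⇑(F k - F l) := by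
    intro k l
    filter_upwards [Lp.coeFn_sub (F k) (F l), (hL2f k).coeFn_toLp, (hL2f l).coeFn_toLp]
      with z h1 h2 h3
    simp only [hF] at h1 h2 h3 ⊢
    rw [h1, Pi.sub_apply, h2, h3]
  have haeU : ∀ k l, (fun z => u k z - u l z) =ᵐ[μm] ⇑(U k - U l) := by
    intro k l
    filter_upwards [Lp.coeFn_sub (U k) (U l), (hL2u k).coeFn_toLp, (hL2u l).coeFn_toLp]
      with z h1 h2 h3
    simp only [hU] at h1 h2 h3 ⊢
    rw [h1, Pi.sub_apply, h2, h3]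
  have hFnorm : ∀ k l, ∫ z in Ioo a b, (f k z - f l z) ^ 2 ∂ν = ‖F k - F l‖ ^ 2 :=
    fun k l => aux_integral_sq (F k - F l) (haeF k l)
  have hUnorm : ∀ k l, ∫ z in Ioo a b, (u k z - u l z) ^ 2 ∂m = ‖U k - U l‖ ^ 2 :=
    fun k l => aux_integral_sq (U k - U l) (haeU k l)
  -- Cauchy sequences
  have hCF : CauchySeq F := by
    refine Metric.cauchySeq_iff.2 fun ε hε => ?_
    obtain ⟨N, hN⟩ := hCauchy (ε ^ 2 / 2) (by positivity)
    refine ⟨N, fun k hk l hl => ?_⟩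
    have h1 := hN k hk l hl
    have h2 : (0:ℝ) ≤ ∫ z in Ioo a b, (u k z - u l z) ^ 2 ∂m :=
      integral_nonneg fun z => sq_nonneg _
    have h3 : ∫ z in Ioo a b, (f k z - f l z) ^ 2 ∂ν < ε ^ 2 := by linarith
    rw [hFnorm k l] at h3
    rw [dist_eq_norm]
    exact lt_of_pow_lt_pow_left₀ 2 hε.le h3
  have hCU : CauchySeq U := by
    refine Metric.cauchySeq_iff.2 fun ε hε => ?_
    obtain ⟨N, hN⟩ := hCauchy (ε ^ 2) (by positivity)
    refine ⟨N, fun k hk l hl => ?_⟩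
    have h1 := hN k hk l hl
    have h2 : (0:ℝ) ≤ ∫ z in Ioo a b, (f k z - f l z) ^ 2 ∂ν :=
      integral_nonneg fun z => sq_nonneg _
    have h3 : ∫ z in Ioo a b, (u k z - u l z) ^ 2 ∂m < ε ^ 2 := by linarith
    rw [hUnorm k l] at h3
    rw [dist_eq_norm]
    exact lt_of_pow_lt_pow_left₀ 2 hε.le h3
  obtain ⟨G, hG⟩ := cauchySeq_tendsto_of_complete hCF
  obtain ⟨W, hW⟩ := cauchySeq_tendsto_of_complete hCU
  set g : ℝ → ℝ := ⇑G with hgdef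
  set w : ℝ → ℝ := ⇑W with hwdef
  -- eLpNorm convergence
  have hGelp : Tendsto (fun k => eLpNorm (f k - g) 2 μν) atTop (𝓝 0) := by
    have h1 := (Lp.tendsto_Lp_iff_tendsto_eLpNorm' F G).1 hG
    refine h1.congr fun k => eLpNorm_congr_ae ?_
    filter_upwards [(hL2f k).coeFn_toLp] with z hz
    simp only [Pi.sub_apply, hF] at hz ⊢
    rw [hz]
  have hWelp : Tendsto (fun k => eLpNorm (u k - w) 2 μm) atTop (𝓝 0) := by
    have h1 := (Lp.tendsto_Lp_iff_tendsto_eLpNorm' U W).1 hW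
    refine h1.congr fun k => eLpNorm_congr_ae ?_
    filter_upwards [(hL2u k).coeFn_toLp] with z hz
    simp only [Pi.sub_apply, hU] at hz ⊢
    rw [hz]
  -- a.e. convergent subsequence for u
  have hTIM : TendstoInMeasure μm u atTop w :=
    tendstoInMeasure_of_tendsto_eLpNorm (by norm_num) (fun k => (hL2u k).1)
      (Lp.memLp W).1 hWelp
  obtain ⟨φ, hφmono, hφae⟩ := hTIM.exists_seq_tendsto_ae
  have hIab : MeasurableSet (Ioo a b) := measurableSet_Ioo
  -- a point of convergence
  have hx₀ : ∃ x₀ ∈ Ioo a b, Tendsto (fun j => u (φ j) x₀) atTop (𝓝 (w x₀)) := by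
    by_contra hcon
    push_neg at hcon
    rw [ae_iff] at hφae
    have hsub : Ioo a b ⊆ {x | ¬ Tendsto (fun j => u (φ j) x) atTop (𝓝 (w x))} :=
      fun x hx => hcon x hx
    have h1 : μm (Ioo a b) ≤ 0 := hφae ▸ measure_mono hsub
    have h2 : 0 < μm (Ioo a b) := by
      rw [hμm, Measure.restrict_apply_self]
      exact hm a b le_rfl hab le_rfl
    exact h2.not_ge h1
  obtain ⟨x₀, hx₀I, hx₀c⟩ := hx₀
  -- convergence of integrals over subintervals
  have hIntConv : ∀ x ∈ Ioo a b, ∀ y ∈ Ioo a b, x ≤ y →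
      Tendsto (fun k => ∫ z in Ioo x y, f k z ∂ν) atTop (𝓝 (∫ z in Ioo x y, g z ∂ν)) := by
    intro x hx y hy hxy
    set μ' := ν.restrict (Ioo x y) with hμ'
    have hsub : Ioo x y ⊆ Ioo a b := Ioo_subset_Ioo hx.1.le hy.2.le
    have hfin : μ' univ ≠ ⊤ := by
      rw [hμ', Measure.restrict_apply_univ, hν x hx y hy hxy]
      exact ENNReal.ofReal_ne_top
    haveI : IsFiniteMeasure μ' := ⟨lt_top_iff_ne_top.2 hfin⟩
    have hle : μ' ≤ μν := by
      have h1 : μ' = μν.restrict (Ioo x y) := by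
        rw [hμν, Measure.restrict_restrict measurableSet_Ioo,
          inter_eq_self_of_subset_left hsub]
      rw [h1]
      exact Measure.restrict_le_self
    have hmf : ∀ k, MemLp (f k) 2 μ' := fun k => (hL2f k).mono_measure hle
    have hmg : MemLp g 2 μ' := (Lp.memLp G).mono_measure hle
    refine tendsto_integral_of_L1' g (hmg.integrable one_le_two).1
      (Eventually.of_forall fun k => (hmf k).integrable one_le_two) ?_
    set C := μ' univ ^ ((1:ℝ)/(1:ℝ≥0∞).toReal - 1/(2:ℝ≥0∞).toReal) with hC
    have hCne : C ≠ ⊤ := by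
      rw [hC]
      refine ENNReal.rpow_ne_top_of_nonneg ?_ hfin
      norm_num
    have hbound : ∀ k, eLpNorm (f k - g) 1 μ' ≤ eLpNorm (f k - g) 2 μν * C := fun k =>
      (eLpNorm_le_eLpNorm_mul_rpow_measure_univ one_le_two ((hmf k).sub hmg).1).trans
        (mul_le_mul_left (eLpNorm_mono_measure _ hle) _)
    have hmul : Tendsto (fun k => eLpNorm (f k - g) 2 μν * C) atTop (𝓝 0) := by
      have h1 := ENNReal.Tendsto.mul_const hGelp (Or.inr hCne)
      simpa using h1
    exact tendsto_of_tendsto_of_tendsto_of_le_of_le tendsto_const_nhds hmul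
      (fun k => bot_le) hbound
  -- define v
  set v : ℝ → ℝ := fun y => if x₀ ≤ y then w x₀ + ∫ z in Ioo x₀ y, g z ∂ν
      else w x₀ - ∫ z in Ioo y x₀, g z ∂ν with hvdef
  have hφat : Tendsto φ atTop atTop := hφmono.tendsto_atTop
  -- pointwise convergence of the subsequence to v
  have hptconv : ∀ x ∈ Ioo a b, Tendsto (fun j => u (φ j) x) atTop (𝓝 (v x)) := by
    intro x hx
    rcases le_or_gt x₀ x with h | h
    · have h1 : ∀ j, u (φ j) x = u (φ j) x₀ + ∫ z in Ioo x₀ x, f (φ j) z ∂ν := by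
        intro j
        have := hac (φ j) x₀ hx₀I x hx h
        linarith
      have h2 := hx₀c.add ((hIntConv x₀ hx₀I x hx h).comp hφat)
      have h3 : v x = w x₀ + ∫ z in Ioo x₀ x, g z ∂ν := by rw [hvdef]; simp [h]
      rw [h3]
      exact Tendsto.congr (fun j => (h1 j).symm) h2
    · have h1 : ∀ j, u (φ j) x = u (φ j) x₀ - ∫ z in Ioo x x₀, f (φ j) z ∂ν := by
        intro j
        have := hac (φ j) x hx x₀ hx₀I h.le
        linarith
      have h2 := hx₀c.sub ((hIntConv x hx x₀ hx₀I h.le).comp hφat)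
      have h3 : v x = w x₀ - ∫ z in Ioo x x₀, g z ∂ν := by
        rw [hvdef]; simp [not_le.2 h]
      rw [h3]
      exact Tendsto.congr (fun j => (h1 j).symm) h2
  -- v = w a.e.
  have hvw : v =ᵐ[μm] w := by
    filter_upwards [hφae, ae_restrict_mem hIab] with x hx1 hx2
    exact tendsto_nhds_unique (hptconv x hx2) hx1
  have hMv : MemLp v 2 μm := (Lp.memLp W).ae_eq hvw.symm
  -- absolute continuity of v
  have hACv : ∀ x ∈ Ioo a b, ∀ y ∈ Ioo a b, x ≤ y →
      v y - v x = ∫ z in Ioo x y, g z ∂ν := by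
    intro x hx y hy hxy
    have h1 : Tendsto (fun j => u (φ j) y - u (φ j) x) atTop (𝓝 (v y - v x)) :=
      (hptconv y hy).sub (hptconv x hx)
    have h2 : Tendsto (fun j => u (φ j) y - u (φ j) x) atTop
        (𝓝 (∫ z in Ioo x y, g z ∂ν)) :=
      Tendsto.congr (fun j => (hac (φ j) x hx y hy hxy).symm)
        ((hIntConv x hx y hy hxy).comp hφat)
    exact tendsto_nhds_unique h1 h2
  -- vanishing of g on F₀
  have hresF₀ : ν.restrict F₀ = μν.restrict F₀ := by
    rw [hμν, Measure.restrict_restrict hF₀, inter_eq_self_of_subset_left hF₀I]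
  have hleF₀ : ν.restrict F₀ ≤ μν := by
    rw [hresF₀]; exact Measure.restrict_le_self
  have htF : Tendsto (fun k => eLpNorm (f k - g) 2 (ν.restrict F₀)) atTop (𝓝 0) :=
    tendsto_of_tendsto_of_tendsto_of_le_of_le tendsto_const_nhds hGelp
      (fun k => bot_le) (fun k => eLpNorm_mono_measure _ hleF₀)
  have hTIMF : TendstoInMeasure (ν.restrict F₀) f atTop g :=
    tendstoInMeasure_of_tendsto_eLpNorm (by norm_num)
      (fun k => ((hL2f k).mono_measure hleF₀).1)
      ((Lp.memLp G).mono_measure hleF₀).1 htF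
  obtain ⟨ψ, hψmono, hψae⟩ := hTIMF.exists_seq_tendsto_ae
  have hgv : ∀ᵐ z ∂ν.restrict F₀, g z = 0 := by
    have hall : ∀ᵐ z ∂ν.restrict F₀, ∀ j, f (ψ j) z = 0 := ae_all_iff.2 fun j => hvanish (ψ j)
    filter_upwards [hall, hψae] with z h1 h2
    have h3 : Tendsto (fun j => f (ψ j) z) atTop (𝓝 0) :=
      Tendsto.congr (fun j => (h1 j).symm) tendsto_const_nhds
    exact tendsto_nhds_unique h2 h3
  -- final convergence
  have haeFG : ∀ k, (fun z => f k z - g z) =ᵐ[μν] ⇑(F k - G) := by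
    intro k
    filter_upwards [Lp.coeFn_sub (F k) G, (hL2f k).coeFn_toLp] with z h1 h2
    simp only [hF] at h1 h2 ⊢
    rw [h1, Pi.sub_apply, h2]
  have haeUW : ∀ k, (fun z => u k z - w z) =ᵐ[μm] ⇑(U k - W) := by
    intro k
    filter_upwards [Lp.coeFn_sub (U k) W, (hL2u k).coeFn_toLp] with z h1 h2
    simp only [hU] at h1 h2 ⊢
    rw [h1, Pi.sub_apply, h2]
  have hA : Tendsto (fun k => ∫ z in Ioo a b, (f k z - g z) ^ 2 ∂ν) atTop (𝓝 0) := by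
    have h2 : Tendsto (fun k => ‖F k - G‖) atTop (𝓝 0) :=
      tendsto_iff_norm_sub_tendsto_zero.1 hG
    have h3 : Tendsto (fun k => ‖F k - G‖ ^ 2) atTop (𝓝 0) := by
      have := h2.pow 2
      simpa using this
    exact Tendsto.congr (fun k => (aux_integral_sq (F k - G) (haeFG k)).symm) h3
  have hB : Tendsto (fun k => ∫ z in Ioo a b, (u k z - v z) ^ 2 ∂m) atTop (𝓝 0) := by
    have h2 : Tendsto (fun k => ‖U k - W‖) atTop (𝓝 0) :=
      tendsto_iff_norm_sub_tendsto_zero.1 hW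
    have h3 : Tendsto (fun k => ‖U k - W‖ ^ 2) atTop (𝓝 0) := by
      have := h2.pow 2
      simpa using this
    refine Tendsto.congr (fun k => ?_) h3
    rw [← aux_integral_sq (U k - W) (haeUW k)]
    refine integral_congr_ae ?_
    filter_upwards [hvw] with z hz
    simp only [hz]
  refine ⟨v, g, hMv, Lp.memLp G, hACv, hgv, ?_⟩
  have hfinal := (hA.const_mul ((1:ℝ)/2)).add hB
  simpa using hfinal
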